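/- arXiv:1503.05637 — 4 statements merged into one kernel-verified Lean document; each statement's English description precedes it below -/
import Mathlib

section
/- Let γ be a prime, L ≥ 1 an integer, and Q an invertible L×L matrix over the prime field F_γ. Then for every permutation π_c of {1,…,L} there exists a permutation π_d of {1,…,L} such that for every j ∈ {1,…,L} the residual coefficient matrix Q^{⟨j⟩} — the j×j submatrix of Q consisting of the rows indexed by S^{⟨j⟩} = {l : π_c(l) ≤ j} and the columns indexed by T^{⟨j⟩} = {m : π_d(m) ≤ j} — is invertible over F_γ. (Lemma 2 of the paper.) -/
/-- Lemma 2: Given a prime `γ`, an invertible `L × L` matrix `Q` over `F_γ = ZMod γ`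
and a permutation `π_c` of `{1,…,L}`, there exists a permutation `π_d` such that
for every `j ∈ {1,…,L}` the `j × j` residual coefficient matrix (rows indexed by
`{l : π_c l ≤ j}`, columns by `{m : π_d m ≤ j}`) is invertible over `F_γ`. -/
theorem srq_permutation_exists (γ L : ℕ) (hγ : Nat.Prime γ) (hL : 1 ≤ L)
    (Q : Matrix (Fin L) (Fin L) (ZMod γ)) (hQ : IsUnit Q.det)
    (πc : Equiv.Perm (Fin L)) :
    ∃ πd : Equiv.Perm (Fin L), ∀ (j : ℕ) (hj1 : 1 ≤ j) (hjL : j ≤ L),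
      IsUnit (Matrix.det (Q.submatrix
        (fun i : Fin j => πc.symm (Fin.castLE hjL i))
        (fun k : Fin j => πd.symm (Fin.castLE hjL k)))) := by
  haveI : Fact γ.Prime := ⟨hγ⟩
  set M : Matrix (Fin L) (Fin L) (ZMod γ) := Q.submatrix πc.symm id with hMdef
  have hM : IsUnit M.det := by
    have h' : M.det = ((Equiv.Perm.sign πc.symm : ℤ) : (ZMod γ)) * Q.det := by
      simpa [hMdef, Matrix.submatrix] using Matrix.det_permute πc.symm Q
    rw [h']
    rcases Int.units_eq_one_or (Equiv.Perm.sign πc.symm) with h | h <;>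
      simp [h, hQ.ne_zero]
  have key : ∀ (j : ℕ) (hjL : j ≤ L), ∃ g : Fin j → Fin L, Function.Injective g ∧
      ∀ (i : ℕ) (hi : i ≤ j), IsUnit ((M.submatrix
        (fun a : Fin i => Fin.castLE (hi.trans hjL) a)
        (fun a : Fin i => g (Fin.castLE hi a))).det) := by
    intro j
    induction j with
    | zero =>
      intro hjL
      refine ⟨Fin.elim0, fun a => a.elim0, fun i hi => ?_⟩
      have hi0 : i = 0 := Nat.le_zero.mp hi
      subst hi0
      simp [Matrix.det_isEmpty]
    | succ j IH =>
      intro hjL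
      have h1 : j ≤ L := Nat.le_of_succ_le hjL
      obtain ⟨g, hginj, hg⟩ := IH h1
      set col : Fin L → (Fin (j + 1) → (ZMod γ)) := fun c r => M (Fin.castLE hjL r) c with hcol
      set Chosen : Fin j → (Fin (j + 1) → (ZMod γ)) := fun m => col (g m) with hCh
      have hB : IsUnit ((M.submatrix
          (fun a : Fin j => Fin.castLE ((le_refl j).trans h1) a)
          (fun a : Fin j => g (Fin.castLE (le_refl j) a))).det) := hg j (le_refl j)
      have hBu : IsUnit (M.submatrix
          (fun a : Fin j => Fin.castLE ((le_refl j).trans h1) a)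
          (fun a : Fin j => g (Fin.castLE (le_refl j) a))) :=
        (Matrix.isUnit_iff_isUnit_det _).mpr hB
      have hChosen : LinearIndependent (ZMod γ) Chosen := by
        have hcols := Matrix.linearIndependent_cols_iff_isUnit.mpr hBu
        refine LinearIndependent.of_comp (LinearMap.funLeft (ZMod γ) (ZMod γ) Fin.castSucc) ?_
        exact hcols
      have hexists : ∃ c : Fin L, col c ∉ Submodule.span (ZMod γ) (Set.range Chosen) := by
        by_contra hcon
        push_neg at hcon
        set N : Matrix (Fin (j + 1)) (Fin L) (ZMod γ) := M.submatrix (Fin.castLE hjL) id with hN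
        have hMrows : LinearIndependent (ZMod γ) (fun r => M r) :=
          Matrix.linearIndependent_rows_iff_isUnit.mpr
            ((Matrix.isUnit_iff_isUnit_det _).mpr hM)
        have hrows : LinearIndependent (ZMod γ) (fun r => N r) :=
          hMrows.comp (Fin.castLE hjL) (Fin.castLE_injective hjL)
        have hrank : N.rank = j + 1 := by
          exact hrows.rank_matrix.trans (Fintype.card_fin _)
        have hle : Submodule.span (ZMod γ) (Set.range N.transpose) ≤ Submodule.span (ZMod γ) (Set.range Chosen) := by
          rw [Submodule.span_le]
          rintro v ⟨c, rfl⟩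
          exact hcon c
        have hfr : N.rank ≤ j := by
          rw [Matrix.rank_eq_finrank_span_cols]
          calc Module.finrank (ZMod γ) (Submodule.span (ZMod γ) (Set.range N.transpose))
              ≤ Module.finrank (ZMod γ) (Submodule.span (ZMod γ) (Set.range Chosen)) :=
                Submodule.finrank_mono hle
            _ ≤ Fintype.card (Fin j) := finrank_range_le_card Chosen
            _ = j := Fintype.card_fin j
        omega
      obtain ⟨c, hc⟩ := hexists
      have hcnot : c ∉ Set.range g := by
        rintro ⟨m, rfl⟩
        exact hc (Submodule.subset_span ⟨m, rfl⟩)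
      refine ⟨Fin.snoc g c, ?_, ?_⟩
      · intro a b hab
        induction a using Fin.lastCases with
        | last =>
          induction b using Fin.lastCases with
          | last => rfl
          | cast b' =>
            rw [Fin.snoc_last, Fin.snoc_castSucc] at hab
            exact absurd ⟨b', hab.symm⟩ hcnot
        | cast a' =>
          induction b using Fin.lastCases with
          | last =>
            rw [Fin.snoc_last, Fin.snoc_castSucc] at hab
            exact absurd ⟨a', hab⟩ hcnot
          | cast b' =>
            rw [Fin.snoc_castSucc, Fin.snoc_castSucc] at hab
            exact congrArg Fin.castSucc (hginj hab)
      · intro i hi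
        rcases Nat.lt_or_ge i (j + 1) with hlt | hge
        · have hi' : i ≤ j := Nat.lt_succ_iff.mp hlt
          have hcast : ∀ a : Fin i,
              (Fin.snoc g c : Fin (j+1) → Fin L) (Fin.castLE hi a) = g (Fin.castLE hi' a) := by
            intro a
            have ha : Fin.castLE hi a = Fin.castSucc (Fin.castLE hi' a) := by
              ext; simp
            rw [ha, Fin.snoc_castSucc]
          have heq : (M.submatrix
              (fun a : Fin i => Fin.castLE (hi.trans hjL) a)
              (fun a : Fin i => (Fin.snoc g c : Fin (j+1) → Fin L) (Fin.castLE hi a))) =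
              (M.submatrix
              (fun a : Fin i => Fin.castLE (hi'.trans h1) a)
              (fun a : Fin i => g (Fin.castLE hi' a))) := by
            ext a b
            simp only [Matrix.submatrix_apply]
            rw [hcast b]
          rw [heq]
          exact hg i hi'
        · have hieq : i = j + 1 := le_antisymm hi hge
          subst hieq
          set A : Matrix (Fin (j+1)) (Fin (j+1)) (ZMod γ) := M.submatrix
              (fun a : Fin (j+1) => Fin.castLE (hi.trans hjL) a)
              (fun a : Fin (j+1) => (Fin.snoc g c : Fin (j+1) → Fin L) (Fin.castLE hi a))
              with hA
          have hAcols : LinearIndependent (ZMod γ) (fun m => A.transpose m) := by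
            have hfun : (fun m => A.transpose m) = Fin.snoc Chosen (col c) := by
              funext m
              induction m using Fin.lastCases with
              | last =>
                rw [Fin.snoc_last]
                funext r
                show A r (Fin.last j) = col c r
                show M _ ((Fin.snoc g c : Fin (j+1) → Fin L) (Fin.castLE hi (Fin.last j))) = _
                rw [show Fin.castLE hi (Fin.last j) = Fin.last j from by ext; simp,
                  Fin.snoc_last]
              | cast m' =>
                rw [Fin.snoc_castSucc]
                funext r
                show A r (Fin.castSucc m') = Chosen m' r
                show M _ ((Fin.snoc g c : Fin (j+1) → Fin L)
                  (Fin.castLE hi (Fin.castSucc m'))) = _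
                rw [show Fin.castLE hi (Fin.castSucc m') = Fin.castSucc m' from by ext; simp,
                  Fin.snoc_castSucc]
            rw [hfun, linearIndependent_fin_snoc]
            exact ⟨hChosen, hc⟩
          have hAu := Matrix.linearIndependent_cols_iff_isUnit.mp hAcols
          exact (Matrix.isUnit_iff_isUnit_det _).mp hAu
  obtain ⟨g, hginj, hg⟩ := key L (le_refl L)
  have hbij : Function.Bijective g := Finite.injective_iff_bijective.mp hginj
  refine ⟨(Equiv.ofBijective g hbij).symm, fun j hj1 hjL => ?_⟩
  have h2 := hg j hjL
  have hEq : (Q.submatrix (fun i : Fin j => πc.symm (Fin.castLE hjL i))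
      (fun k : Fin j => (Equiv.ofBijective g hbij).symm.symm (Fin.castLE hjL k))) =
      M.submatrix (fun a : Fin j => Fin.castLE (hjL.trans (le_refl L)) a)
        (fun a : Fin j => g (Fin.castLE hjL a)) := by
    ext a b
    simp [Matrix.submatrix_apply, hMdef, Equiv.ofBijective]
  rw [hEq]
  exact h2
end

section
/- Let γ be a prime, L ≥ 1 an integer, and Q an invertible L×L matrix over the prime field F_γ. Then for every permutation π_s of {1,…,L} there exists a permutation π_e of {1,…,L} such that for every i ∈ {1,…,L} the residual coefficient matrix Q^{(i)} — the (L−i+1)×(L−i+1) submatrix of Q consisting of the rows indexed by S^{(i)} = {l : π_s(l) ≥ i} and the columns indexed by T^{(i)} = {m : π_e(m) ≥ i} — is invertible over F_γ. (Lemma 4 of the paper.) -/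
open Matrix Submodule Set in
theorem srm_key {F : Type*} [Field F] {L : ℕ} (M : Matrix (Fin L) (Fin L) F)
    (hM : IsUnit M.det) :
    ∃ c : Fin L → Fin L, Function.Bijective c ∧
      ∀ (t n : ℕ) (_ : t + n = L),
        IsUnit ((M.submatrix (fun j : Fin n => (⟨t + j, by have := j.isLt; omega⟩ : Fin L))
          (fun j : Fin n => c ⟨t + j, by have := j.isLt; omega⟩)).det) := by
  classical
  have main : ∀ k : ℕ, k ≤ L → ∃ e : Fin k → Fin L, Function.Injective e ∧
      ∀ (m : ℕ) (hm : m ≤ k) (_ : m ≤ L),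
        LinearIndependent F (fun j : Fin m => fun j' : Fin m =>
          M ⟨L - m + j', by have := j'.isLt; omega⟩ (e (Fin.castLE hm j))) := by
    intro k
    induction k with
    | zero =>
      intro _
      refine ⟨Fin.elim0, fun a => a.elim0, ?_⟩
      intro m hm hmL
      interval_cases m
      exact linearIndependent_empty_type
    | succ k ih =>
      intro hk1
      obtain ⟨e, he, hind⟩ := ih (by omega)
      have hkL : k < L := by omega
      set r : Fin (k+1) → Fin L :=
        fun j' => ⟨L - (k+1) + j', by have := j'.isLt; omega⟩ with hr
      set col : Fin L → (Fin (k+1) → F) := fun a => fun j' => M (r j') a with hcol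
      set w : Fin k → (Fin (k+1) → F) := fun j => col (e j) with hwdef
      have hw : LinearIndependent F w := by
        apply LinearIndependent.of_comp (LinearMap.funLeft F F Fin.succ)
        have h0 := hind k le_rfl (by omega)
        have heq : ((LinearMap.funLeft F F Fin.succ) ∘ w)
            = fun j : Fin k => fun j' : Fin k =>
              M ⟨L - k + j', by have := j'.isLt; omega⟩ (e (Fin.castLE le_rfl j)) := by
          funext j j'
          simp only [Function.comp, LinearMap.funLeft_apply, hwdef, hcol, hr]
          have h1 : r (Fin.succ j') = (⟨L - k + j'.val, by have := j'.isLt; omega⟩ : Fin L) :=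
            Fin.ext (by simp [hr, Fin.val_succ]; omega)
          have h2 : e (Fin.castLE le_rfl j) = e j := by congr 1
          rw [h2]
          exact congrArg (fun z => M z (e j)) h1
        rw [heq]
        exact h0
      have hspan_top : ∀ v0 : Fin (k+1) → F, v0 ∈ Submodule.span F (Set.range col) := by
        intro v0
        set y : Fin L → F := fun i =>
          if h : L - (k+1) ≤ i.val then v0 ⟨i.val - (L - (k+1)), by have := i.isLt; omega⟩
          else 0 with hy
        obtain ⟨x, hx⟩ := (Matrix.mulVec_surjective_iff_isUnit.mpr ((Matrix.isUnit_iff_isUnit_det M).mpr hM)) y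
        refine (mem_span_range_iff_exists_fun F).mpr ⟨x, ?_⟩
        funext j'
        have hxr := congrFun hx (r j')
        have h1 : (∑ i, x i • col i) j' = ∑ i, M (r j') i * x i := by
          rw [Finset.sum_apply]
          exact Finset.sum_congr rfl (fun i _ => by simp [hcol, mul_comm])
        have h2 : y (r j') = v0 j' := by
          have hc : L - (k+1) ≤ (r j').val := by simp [hr]
          rw [hy]
          simp only [hc, dif_pos]
          congr 1
          exact Fin.ext (by simp [hr])
        rw [h1]
        rw [Matrix.mulVec, dotProduct] at hxr  -- hxr : ∑ ... = y (r j') ?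
        rw [hxr, h2]
      have hex : ∃ a : Fin L, col a ∉ Submodule.span F (Set.range w) := by
        by_contra hcon
        push_neg at hcon
        have hle : (⊤ : Submodule F (Fin (k+1) → F)) ≤ Submodule.span F (Set.range w) := by
          intro v0 _
          refine Submodule.span_le.mpr ?_ (hspan_top v0)
          rintro _ ⟨a, rfl⟩
          exact hcon a
        have h1 : Module.finrank F (⊤ : Submodule F (Fin (k+1) → F))
            ≤ Module.finrank F (Submodule.span F (Set.range w)) :=
          Submodule.finrank_mono hle
        rw [finrank_top F (Fin (k+1) → F)] at h1
        have h2 : Module.finrank F (Submodule.span F (Set.range w)) ≤ k := by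
          have := finrank_range_le_card (R := F) w
          simpa [Set.finrank] using this
        rw [Module.finrank_fin_fun] at h1
        omega
      obtain ⟨a, ha⟩ := hex
      have hane : ∀ j : Fin k, a ≠ e j := by
        intro j hj
        exact ha (by rw [hj]; exact Submodule.subset_span ⟨j, rfl⟩)
      refine ⟨Fin.snoc e a, ?_, ?_⟩
      · intro x y hxy
        induction x using Fin.lastCases with
        | last =>
          induction y using Fin.lastCases with
          | last => rfl
          | cast j =>
            rw [Fin.snoc_last, Fin.snoc_castSucc] at hxy
            exact absurd hxy (hane j)
        | cast j =>
          induction y using Fin.lastCases with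
          | last =>
            rw [Fin.snoc_last, Fin.snoc_castSucc] at hxy
            exact absurd hxy.symm (hane j)
          | cast j2 =>
            rw [Fin.snoc_castSucc, Fin.snoc_castSucc] at hxy
            exact congrArg Fin.castSucc (he hxy)
      · intro m hm hmL
        rcases Nat.lt_or_ge m (k+1) with hmk | hmk
        · have hm' : m ≤ k := by omega
          have h0 := hind m hm' hmL
          have harg : ∀ j : Fin m,
              (Fin.snoc e a : Fin (k+1) → Fin L) (Fin.castLE hm j) = e (Fin.castLE hm' j) := by
            intro j
            have h1 : Fin.castLE hm j = Fin.castSucc (Fin.castLE hm' j) := Fin.ext rfl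
            rw [h1, Fin.snoc_castSucc]
          simp only [harg]
          exact h0
        · have hm1 : m = k + 1 := by omega
          subst hm1
          have hid : ∀ j : Fin (k+1), Fin.castLE hm j = j := fun j => Fin.ext rfl
          have hfam : (fun j : Fin (k+1) => fun j' : Fin (k+1) =>
              M ⟨L - (k+1) + j', by have := j'.isLt; omega⟩
                ((Fin.snoc e a : Fin (k+1) → Fin L) (Fin.castLE hm j)))
              = Fin.snoc w (col a) := by
            funext j
            rw [hid]
            induction j using Fin.lastCases with
            | last => simp only [Fin.snoc_last]; rfl
            | cast j0 => simp only [Fin.snoc_castSucc]; rfl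
          rw [hfam]
          exact linearIndependent_fin_snoc.mpr ⟨hw, ha⟩
  obtain ⟨e, he, hprop⟩ := main L le_rfl
  have hcinj : Function.Injective
      (fun p : Fin L => e ⟨L - 1 - p.val, by have := p.isLt; omega⟩) := by
    intro p q hpq
    have h1 := he hpq
    have h2 := congrArg Fin.val h1
    simp only at h2
    have hp := p.isLt
    have hq := q.isLt
    exact Fin.ext (by omega)
  refine ⟨fun p => e ⟨L - 1 - p.val, by have := p.isLt; omega⟩,
    (Finite.injective_iff_bijective).mp hcinj, ?_⟩
  intro t n h
  have hn : n ≤ L := by omega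
  rw [← Matrix.isUnit_iff_isUnit_det, ← Matrix.linearIndependent_cols_iff_isUnit]
  have hg : Function.Injective
      (fun j : Fin n => (⟨n - 1 - j.val, by have := j.isLt; omega⟩ : Fin n)) := by
    intro p q hpq
    have h2 := congrArg Fin.val hpq
    simp only at h2
    have hp := p.isLt
    have hq := q.isLt
    exact Fin.ext (by omega)
  have h1 := (hprop n hn hn).comp _ hg
  have heq : (fun i : Fin n =>
      ((M.submatrix (fun j : Fin n => (⟨t + j, by have := j.isLt; omega⟩ : Fin L))
        (fun j : Fin n =>
          (fun p : Fin L => e ⟨L - 1 - p.val, by have := p.isLt; omega⟩)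
            ⟨t + j, by have := j.isLt; omega⟩))ᵀ i))
      = fun i : Fin n => (fun j : Fin n => fun j' : Fin n =>
          M ⟨L - n + j', by have := j'.isLt; omega⟩
            (e (Fin.castLE hn j))) ((fun j : Fin n =>
              (⟨n - 1 - j.val, by have := j.isLt; omega⟩ : Fin n)) i) := by
    funext i j'
    show M ⟨t + j'.val, _⟩ (e ⟨L - 1 - (t + i.val), _⟩) = M ⟨L - n + j'.val, _⟩ _
    have e1 : (⟨t + j'.val, by have := j'.isLt; omega⟩ : Fin L)
        = ⟨L - n + j'.val, by have := j'.isLt; omega⟩ :=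
      Fin.ext (show t + j'.val = L - n + j'.val by omega)
    have e2 : (⟨L - 1 - (t + i.val), by have := i.isLt; omega⟩ : Fin L)
        = Fin.castLE hn (⟨n - 1 - i.val, by have := i.isLt; omega⟩ : Fin n) :=
      Fin.ext (by simp [Fin.castLE]; omega)
    rw [e1, e2]
  refine (congrArg (fun f : Fin n → Fin n → F => LinearIndependent F f) heq).mpr ?_
  exact h1

/-- Lemma 4: Given a prime `γ`, an invertible `L × L` matrix `Q` over `F_γ = ZMod γ`
and a permutation `π_s` of `{1,…,L}`, there exists a permutation `π_e` such that
for every `i ∈ {1,…,L}` the `(L−i+1) × (L−i+1)` residual coefficient matrix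
(rows indexed by `{l : π_s l ≥ i}`, columns by `{m : π_e m ≥ i}`) is invertible. -/
theorem srm_permutation_exists (γ L : ℕ) (hγ : Nat.Prime γ) (hL : 1 ≤ L)
    (Q : Matrix (Fin L) (Fin L) (ZMod γ)) (hQ : IsUnit Q.det)
    (πs : Equiv.Perm (Fin L)) :
    ∃ πe : Equiv.Perm (Fin L), ∀ (i : ℕ) (hi1 : 1 ≤ i) (hiL : i ≤ L),
      IsUnit (Matrix.det (Q.submatrix
        (fun k : Fin (L - i + 1) =>
          πs.symm ⟨i - 1 + (k : ℕ), by have := k.isLt; omega⟩)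
        (fun k : Fin (L - i + 1) =>
          πe.symm ⟨i - 1 + (k : ℕ), by have := k.isLt; omega⟩))) := by
  haveI := Fact.mk hγ
  have hM : IsUnit (Q.submatrix πs.symm id).det := by
    rw [Matrix.det_permute]
    rcases Int.units_eq_one_or (Equiv.Perm.sign πs.symm) with h | h <;>
      simp [h, hQ.ne_zero]
  obtain ⟨c, hc, hdet⟩ := srm_key (Q.submatrix πs.symm id) hM
  refine ⟨(Equiv.ofBijective c hc).symm, ?_⟩
  intro i hi1 hiL
  have h := hdet (i - 1) (L - i + 1) (by omega)
  rw [Matrix.submatrix_submatrix] at h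
  have heq : (Q.submatrix
        (fun k : Fin (L - i + 1) =>
          πs.symm ⟨i - 1 + (k : ℕ), by have := k.isLt; omega⟩)
        (fun k : Fin (L - i + 1) =>
          (Equiv.ofBijective c hc).symm.symm ⟨i - 1 + (k : ℕ), by have := k.isLt; omega⟩))
      = Q.submatrix
        (πs.symm ∘ fun j : Fin (L - i + 1) => (⟨i - 1 + j, by have := j.isLt; omega⟩ : Fin L))
        (id ∘ fun j : Fin (L - i + 1) => c ⟨i - 1 + j, by have := j.isLt; omega⟩) := by
    congr 1
  rw [heq]
  exact h
end

section
/- Let L ≥ 1, and let h, p ∈ ℝ^L with p_l ≥ 0 for all l. Define the L×L matrix D by D_{ij} = p_i · δ_{ij} − p_i p_j h_i h_j / (1 + Σ_{l=1}^L p_l h_l²), where δ_{ij} is the Kronecker delta. Then for every a ∈ ℝ^L, aᵀ D a = φ(α_opt), where φ(α) = α² + Σ_{l=1}^L p_l (α h_l − a_l)² and α_opt = (Σ_l h_l p_l a_l)/(1 + Σ_l p_l h_l²). That is, the minimum effective-noise power is the quadratic form of a in the matrix D. (Eq. (52) of the paper.) -/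
open Matrix

/-- Eq. (52): with `D_{ij} = p_i δ_{ij} − p_i p_j h_i h_j/(1 + Σ p_l h_l²)`,
the quadratic form `aᵀ D a` equals the minimum effective-noise power
`φ(α_opt)`, where `φ(α) = α² + Σ p_l (α h_l − a_l)²` and
`α_opt = (Σ h_l p_l a_l)/(1 + Σ p_l h_l²)`. -/
theorem quadratic_form_equals_min_noise (L : ℕ) (hL : 1 ≤ L)
    (h p : Fin L → ℝ) (hp : ∀ l, 0 ≤ p l) :
    let D : Matrix (Fin L) (Fin L) ℝ := fun i j =>
      p i * (if i = j then 1 else 0) -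
        p i * p j * h i * h j / (1 + ∑ l, p l * h l ^ 2)
    ∀ a : Fin L → ℝ,
      a ⬝ᵥ D.mulVec a =
        (((∑ l, h l * p l * a l) / (1 + ∑ l, p l * h l ^ 2)) ^ 2 +
          ∑ l, p l * (((∑ l', h l' * p l' * a l') /
            (1 + ∑ l', p l' * h l' ^ 2)) * h l - a l) ^ 2) := by
  intro D a
  have hSpos : (0:ℝ) < 1 + ∑ l, p l * h l ^ 2 :=
    add_pos_of_pos_of_nonneg one_pos
      (Finset.sum_nonneg fun l _ => mul_nonneg (hp l) (sq_nonneg _))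
  set S : ℝ := 1 + ∑ l, p l * h l ^ 2 with hSdef
  have hS0 : S ≠ 0 := ne_of_gt hSpos
  set T : ℝ := ∑ l, h l * p l * a l with hT
  have hQ : S - 1 = ∑ l, p l * h l ^ 2 := by rw [hSdef]; ring
  -- LHS
  have hL1 : a ⬝ᵥ D.mulVec a = (∑ l, p l * a l ^ 2) - T * T / S := by
    have key : ∀ i, (∑ j, (p i * (if i = j then 1 else 0) -
        p i * p j * h i * h j / S) * a j) = p i * a i - p i * h i * T / S := by
      intro i
      rw [Finset.sum_congr rfl (fun j _ => sub_mul _ _ (a j)),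
        Finset.sum_sub_distrib]
      congr 1
      · simp [mul_ite, ite_mul, Finset.sum_ite_eq, Finset.mem_univ]
      · rw [hT, Finset.mul_sum, Finset.sum_div]
        exact Finset.sum_congr rfl fun j _ => by ring
    simp only [dotProduct, mulVec, D]
    rw [Finset.sum_congr rfl (fun i _ => by rw [key i])]
    have : ∀ i, a i * (p i * a i - p i * h i * T / S) =
        p i * a i ^ 2 - (h i * p i * a i) * T / S := fun i => by ring
    rw [Finset.sum_congr rfl (fun i _ => this i), Finset.sum_sub_distrib]
    congr 1
    rw [hT, ← Finset.sum_div, ← Finset.sum_mul]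
  -- RHS
  have hL2 : ((T / S) ^ 2 + ∑ l, p l * ((T / S) * h l - a l) ^ 2)
      = (∑ l, p l * a l ^ 2) - T * T / S := by
    have expand : ∀ l, p l * ((T / S) * h l - a l) ^ 2 =
        (T / S) ^ 2 * (p l * h l ^ 2) - 2 * (T / S) * (h l * p l * a l)
          + p l * a l ^ 2 := fun l => by ring
    rw [Finset.sum_congr rfl (fun l _ => expand l)]
    rw [Finset.sum_add_distrib, Finset.sum_sub_distrib, ← Finset.mul_sum,
      ← Finset.mul_sum, ← hQ, ← hT]
    field_simp
    ring
  rw [hL1, ← hL2]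
end

section
/- Let L ≥ 1, and let h, p ∈ ℝ^L with p_l > 0 for all l. Then the L×L matrix D with entries D_{ij} = p_i · δ_{ij} − p_i p_j h_i h_j / (1 + Σ_{l=1}^L p_l h_l²) is symmetric and positive definite, i.e., Dᵀ = D and aᵀ D a > 0 for every nonzero a ∈ ℝ^L. -/
open Matrix

/-- The Gram matrix `D` with entries
`D_{ij} = p_i δ_{ij} − p_i p_j h_i h_j/(1 + Σ p_l h_l²)` (with all `p_l > 0`)
is symmetric and positive definite. -/
theorem gram_matrix_symm_posdef (L : ℕ) (hL : 1 ≤ L)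
    (h p : Fin L → ℝ) (hp : ∀ l, 0 < p l) :
    let D : Matrix (Fin L) (Fin L) ℝ := fun i j =>
      p i * (if i = j then 1 else 0) -
        p i * p j * h i * h j / (1 + ∑ l, p l * h l ^ 2)
    Dᵀ = D ∧ ∀ a : Fin L → ℝ, a ≠ 0 → 0 < a ⬝ᵥ D.mulVec a := by
  intro D
  set S : ℝ := ∑ l, p l * h l ^ 2 with hS
  have hSnn : 0 ≤ S := Finset.sum_nonneg fun l _ =>
    mul_nonneg (hp l).le (sq_nonneg _)
  have hs : (0:ℝ) < 1 + S := by linarith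
  constructor
  · ext i j
    rw [transpose_apply]; simp only [D]
    by_cases hij : i = j
    · subst hij; ring
    · simp only [if_neg hij, if_neg (Ne.symm hij)]
      ring
  · intro a ha
    set T : ℝ := ∑ l, p l * h l * a l with hT
    set Q : ℝ := ∑ l, p l * a l ^ 2 with hQ
    have hQpos : 0 < Q := by
      obtain ⟨i, hi⟩ : ∃ i, a i ≠ 0 := by
        by_contra hc
        push_neg at hc
        exact ha (funext hc)
      refine Finset.sum_pos' (fun l _ => mul_nonneg (hp l).le (sq_nonneg _))
        ⟨i, Finset.mem_univ i, mul_pos (hp i) (by positivity)⟩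
    have key : a ⬝ᵥ D.mulVec a = Q - T ^ 2 / (1 + S) := by
      simp only [dotProduct, mulVec, D, dotProduct]
      have : ∀ i, ∑ j, (p i * (if i = j then 1 else 0) -
          p i * p j * h i * h j / (1 + S)) * a j
          = p i * a i - p i * h i * T / (1 + S) := by
        intro i
        simp only [sub_mul]
        rw [Finset.sum_sub_distrib]
        congr 1
        · rw [Finset.sum_eq_single i]
          · simp
          · intro b _ hb; simp [Ne.symm hb]
          · simp
        · rw [hT, Finset.mul_sum, Finset.sum_div]
          exact Finset.sum_congr rfl fun j _ => by ring
      simp_rw [← hS, this, mul_sub]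
      rw [hQ, Finset.sum_sub_distrib]
      congr 1
      · congr 1; ext l; ring
      · rw [pow_two, hT, Finset.mul_sum, Finset.sum_div]
        congr 1; ext l; ring
    rw [key]
    have cauchy : T ^ 2 ≤ S * Q := by
      have := Finset.sum_mul_sq_le_sq_mul_sq Finset.univ
        (fun l => Real.sqrt (p l) * h l) (fun l => Real.sqrt (p l) * a l)
      have e1 : ∀ l : Fin L, Real.sqrt (p l) * h l * (Real.sqrt (p l) * a l)
          = p l * h l * a l := by
        intro l
        have hh : Real.sqrt (p l) * Real.sqrt (p l) = p l :=
          Real.mul_self_sqrt (hp l).le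
        calc Real.sqrt (p l) * h l * (Real.sqrt (p l) * a l)
            = (Real.sqrt (p l) * Real.sqrt (p l)) * (h l * a l) := by ring
          _ = p l * h l * a l := by rw [hh]; ring
      have e2 : ∀ l : Fin L, (Real.sqrt (p l) * h l) ^ 2 = p l * h l ^ 2 := by
        intro l; rw [mul_pow, Real.sq_sqrt (hp l).le]
      have e3 : ∀ l : Fin L, (Real.sqrt (p l) * a l) ^ 2 = p l * a l ^ 2 := by
        intro l; rw [mul_pow, Real.sq_sqrt (hp l).le]
      simp_rw [e1, e2, e3] at this
      exact this
    have : T ^ 2 / (1 + S) < Q := by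
      rw [div_lt_iff₀ hs]
      nlinarith
    linarith
end
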